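/- Spectral support of the GCN message-passing operator: every eigenvalue λ of D_1^{−1/2}·A_1·D_1^{−1/2}, where A_1 = A + I_n and D_1 is the diagonal matrix with entries d_i + 1, satisfies −(d_max − 1)/(d_max + 1) ≤ λ ≤ 1, where d_max = max_i d_i is the maximum degree. -/
import Mathlib


open Matrix BigOperators Finset

/-- Degree of node `i`: the `i`-th row sum of the adjacency matrix `A`. -/
noncomputable def adjDeg {n : ℕ} (A : Matrix (Fin n) (Fin n) ℝ) (i : Fin n) : ℝ :=
  ∑ j, A i j

/-- The diagonal matrix `D_a^e` with diagonal entries `(d_i + a) ^ e` (real powers). -/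
noncomputable def Dpow {n : ℕ} (A : Matrix (Fin n) (Fin n) ℝ) (a e : ℝ) :
    Matrix (Fin n) (Fin n) ℝ :=
  Matrix.diagonal (fun i => (adjDeg A i + a) ^ e)

/-- The parametrised graph shift operator
`γ(A,S) = m1·D_a^{e1} + m2·D_a^{e2}·A_a·D_a^{e3} + m3·I_n`, where `A_a = A + a·I_n`. -/
noncomputable def pgso {n : ℕ} (A : Matrix (Fin n) (Fin n) ℝ)
    (m1 m2 m3 e1 e2 e3 a : ℝ) : Matrix (Fin n) (Fin n) ℝ :=
  m1 • Dpow A a e1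
    + m2 • (Dpow A a e2 * (A + a • (1 : Matrix (Fin n) (Fin n) ℝ)) * Dpow A a e3)
    + m3 • (1 : Matrix (Fin n) (Fin n) ℝ)

lemma gcn_sum_swap_sq {n : ℕ} (A : Matrix (Fin n) (Fin n) ℝ) (hsymm : A.IsSymm)
    (w : Fin n → ℝ) :
    ∑ i, ∑ j, A i j * w j ^ 2 = ∑ i, ∑ j, A i j * w i ^ 2 := by
  rw [Finset.sum_comm]
  refine Finset.sum_congr rfl fun i _ => Finset.sum_congr rfl fun j _ => ?_
  rw [hsymm.apply]

lemma gcn_quad_bound {n : ℕ} (A : Matrix (Fin n) (Fin n) ℝ) (hsymm : A.IsSymm)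
    (hnonneg : ∀ i j, 0 ≤ A i j) (w : Fin n → ℝ) (ε : ℝ) (hε : ε * ε = 1) :
    0 ≤ 2 * ∑ i, adjDeg A i * w i ^ 2 + 2 * ε * ∑ i, ∑ j, A i j * (w i * w j) := by
  have h0 : 0 ≤ ∑ i, ∑ j, A i j * (w i + ε * w j) ^ 2 := by
    refine Finset.sum_nonneg fun i _ => Finset.sum_nonneg fun j _ =>
      mul_nonneg (hnonneg i j) (sq_nonneg _)
  have hexp : ∑ i, ∑ j, A i j * (w i + ε * w j) ^ 2
      = 2 * ∑ i, adjDeg A i * w i ^ 2 + 2 * ε * ∑ i, ∑ j, A i j * (w i * w j) := by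
    have e1 : ∀ i j : Fin n, A i j * (w i + ε * w j) ^ 2
        = A i j * w i ^ 2 + A i j * w j ^ 2 + 2 * ε * (A i j * (w i * w j)) := by
      intro i j
      have : (w i + ε * w j) ^ 2 = w i ^ 2 + (ε * ε) * w j ^ 2 + 2 * ε * (w i * w j) := by
        ring
      rw [this, hε]; ring
    calc ∑ i, ∑ j, A i j * (w i + ε * w j) ^ 2
        = ∑ i, ∑ j, (A i j * w i ^ 2 + A i j * w j ^ 2 + 2 * ε * (A i j * (w i * w j))) := by
          refine Finset.sum_congr rfl fun i _ => Finset.sum_congr rfl fun j _ => e1 i j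
      _ = (∑ i, ∑ j, A i j * w i ^ 2) + (∑ i, ∑ j, A i j * w j ^ 2)
            + 2 * ε * ∑ i, ∑ j, A i j * (w i * w j) := by
          simp [Finset.sum_add_distrib, Finset.mul_sum]
      _ = 2 * ∑ i, adjDeg A i * w i ^ 2 + 2 * ε * ∑ i, ∑ j, A i j * (w i * w j) := by
          rw [gcn_sum_swap_sq A hsymm]
          have : ∑ i, ∑ j, A i j * w i ^ 2 = ∑ i, adjDeg A i * w i ^ 2 := by
            refine Finset.sum_congr rfl fun i _ => ?_
            rw [adjDeg, Finset.sum_mul]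
          rw [this]; ring
  rw [← hexp]; exact h0

/-- Spectral support of the GCN message-passing operator: every eigenvalue `λ` of
`D_1^{−1/2}·A_1·D_1^{−1/2}` satisfies `−(d_max − 1)/(d_max + 1) ≤ λ ≤ 1`. -/
theorem gcn_operator_spectral_support
    (n : ℕ) (hn : 0 < n) (A : Matrix (Fin n) (Fin n) ℝ)
    (hsymm : A.IsSymm) (hnonneg : ∀ i j, 0 ≤ A i j) (hdiag : ∀ i, A i i = 0)
    (lam : ℝ) (v : Fin n → ℝ) (hv : v ≠ 0)
    (heig : (Dpow A 1 (-(1 / 2)) * (A + (1 : Matrix (Fin n) (Fin n) ℝ))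
        * Dpow A 1 (-(1 / 2))).mulVec v = lam • v) :
    -((Finset.univ.sup' ⟨⟨0, hn⟩, Finset.mem_univ _⟩ (adjDeg A) - 1)
        / (Finset.univ.sup' ⟨⟨0, hn⟩, Finset.mem_univ _⟩ (adjDeg A) + 1)) ≤ lam ∧
    lam ≤ 1 := by
  set D : ℝ := Finset.univ.sup' ⟨⟨0, hn⟩, Finset.mem_univ _⟩ (adjDeg A) with hD
  have hdnn : ∀ i, 0 ≤ adjDeg A i := fun i =>
    Finset.sum_nonneg fun j _ => hnonneg i j
  have hdle : ∀ i, adjDeg A i ≤ D := fun i => Finset.le_sup' _ (Finset.mem_univ i)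
  have hDnn : 0 ≤ D := le_trans (hdnn _) (hdle ⟨0, hn⟩)
  have hD1 : (0:ℝ) < D + 1 := by linarith
  have hpos : ∀ i, (0:ℝ) < adjDeg A i + 1 := fun i => by linarith [hdnn i]
  set c : Fin n → ℝ := fun i => (adjDeg A i + 1) ^ (-(1/2) : ℝ) with hc
  set w : Fin n → ℝ := fun i => c i * v i with hw
  have hcc : ∀ i, c i * c i = (adjDeg A i + 1)⁻¹ := by
    intro i
    rw [hc, ← Real.rpow_add (hpos i),
      show (-(1/2) + -(1/2) : ℝ) = -1 by norm_num, Real.rpow_neg_one]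
  -- scalar eigen equation
  have heq : ∀ i, ∑ j, c i * ((A i j + if i = j then 1 else 0) * (c j * v j)) = lam * v i := by
    intro i
    have := congrFun heig i
    rw [Matrix.mulVec, dotProduct] at this
    simp only [Pi.smul_apply, smul_eq_mul] at this
    rw [← this]
    refine Finset.sum_congr rfl fun j _ => ?_
    rw [Dpow, Matrix.mul_diagonal, Matrix.diagonal_mul, Matrix.add_apply, Matrix.one_apply]
    simp only [hc]
    ring
  set S : ℝ := ∑ i, v i ^ 2 with hS
  set T : ℝ := ∑ i, w i ^ 2 with hT
  have hwv : ∀ i, w i ^ 2 = (adjDeg A i + 1)⁻¹ * v i ^ 2 := by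
    intro i
    rw [hw]
    simp only
    rw [mul_pow, sq (c i), hcc i]
  have hdwv : ∀ i, (adjDeg A i + 1) * w i ^ 2 = v i ^ 2 := by
    intro i
    rw [hwv i, ← mul_assoc, mul_inv_cancel₀ (ne_of_gt (hpos i)), one_mul]
  have hSpos : 0 < S := by
    obtain ⟨i, hi⟩ : ∃ i, v i ≠ 0 := by
      by_contra h
      push_neg at h
      exact hv (funext h)
    refine Finset.sum_pos' (fun j _ => sq_nonneg _) ⟨i, Finset.mem_univ i, ?_⟩
    positivity
  -- λ S = Q
  have hQ : lam * S = (∑ i, ∑ j, A i j * (w i * w j)) + T := by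
    have h1 : lam * S = ∑ i, v i * (lam * v i) := by
      rw [hS, Finset.mul_sum]
      refine Finset.sum_congr rfl fun i _ => by ring
    rw [h1]
    have h2 : ∀ i, v i * (lam * v i)
        = ∑ j, (A i j * (w i * w j) + (if i = j then 1 else 0) * (w i * w j)) := by
      intro i
      rw [← heq i, Finset.mul_sum]
      refine Finset.sum_congr rfl fun j _ => ?_
      rw [hw]
      simp only
      ring
    calc ∑ i, v i * (lam * v i)
        = ∑ i, ∑ j, (A i j * (w i * w j) + (if i = j then 1 else 0) * (w i * w j)) :=
          Finset.sum_congr rfl fun i _ => h2 i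
      _ = (∑ i, ∑ j, A i j * (w i * w j)) + T := by
          rw [hT, ← Finset.sum_add_distrib]
          refine Finset.sum_congr rfl fun i _ => ?_
          rw [Finset.sum_add_distrib]
          congr 1
          simp [ite_mul, Finset.sum_ite_eq, sq]
  have hDw : ∑ i, adjDeg A i * w i ^ 2 = S - T := by
    have : ∀ i, adjDeg A i * w i ^ 2 = v i ^ 2 - w i ^ 2 := by
      intro i
      have := hdwv i
      nlinarith [hdwv i]
    rw [hS, hT]
    rw [← Finset.sum_sub_distrib]
    exact Finset.sum_congr rfl fun i _ => this i
  -- T lower bound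
  have hTS : S / (D + 1) ≤ T := by
    rw [hT, div_eq_mul_inv, hS, Finset.sum_mul]
    refine Finset.sum_le_sum fun i _ => ?_
    rw [hwv i]
    rw [mul_comm]
    refine mul_le_mul_of_nonneg_right ?_ (sq_nonneg _)
    exact inv_anti₀ (hpos i) (by linarith [hdle i])
  constructor
  · -- lower bound
    have hq := gcn_quad_bound A hsymm hnonneg w 1 (by norm_num)
    have hAw : -(S - T) ≤ ∑ i, ∑ j, A i j * (w i * w j) := by
      rw [← hDw]; linarith
    have : (-1 + 2 / (D + 1)) * S ≤ lam * S := by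
      have h2T : 2 * (S / (D + 1)) ≤ 2 * T := by linarith
      have : lam * S ≥ -(S - T) + T := by linarith [hQ]
      have hst : -(S - T) + T = -S + 2 * T := by ring
      have : -S + 2 * (S / (D+1)) ≤ lam * S := by linarith
      calc (-1 + 2 / (D + 1)) * S = -S + 2 * (S / (D+1)) := by ring
        _ ≤ lam * S := this
    have hfrac : -((D - 1) / (D + 1)) = -1 + 2 / (D + 1) := by
      field_simp
      ring
    rw [hfrac]
    exact le_of_mul_le_mul_right (by linarith) hSpos
  · -- upper bound
    have hq := gcn_quad_bound A hsymm hnonneg w (-1) (by norm_num)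
    have hAw : ∑ i, ∑ j, A i j * (w i * w j) ≤ S - T := by
      rw [← hDw]; linarith
    have : lam * S ≤ S := by linarith [hQ]
    exact le_of_mul_le_mul_right (by linarith) hSpos
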